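/- Let A be a calibrated R-superalgebra, n ≥ 1, and e ∈ 𝔞 an idempotent such that be ∈ {b, 0} for every b ∈ B^A. Calibrate the left M_n(A)-supermodule Col_n(Ae) of column vectors with entries in Ae by Col_n(Ae)_𝔞 = Col_n(𝔞e) and Col_n(Ae)_𝔠 = Col_n(𝔠e). Then there is an isomorphism of left T^A(n,d)_R-supermodules Γ̃^d(Col_n(Ae)) ≅ T^A(n,d)_R · η^{e^d}_{1^d,1^d}, where η^{e^d}_{1^d,1^d} = (ξ^e_{1,1})^{⊗d} is the idempotent of T^A(n,d)_R corresponding to the constant tuple with entry the matrix unit ξ^e_{1,1}. -/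

import Mathlib

open scoped BigOperators
open Finsupp

set_option maxHeartbeats 1000000

namespace Paper

noncomputable section

variable (K : Type) [CommRing K]

/-- Coordinate model for the `d`-th tensor power `V^{⊗ d}` of a free module `V`
with basis indexed by `β`: the basis of `V^{⊗ d}` is indexed by `d`-tuples in `β`. -/
abbrev TPow (β : Type) (d : ℕ) : Type := (Fin d → β) →₀ K

variable {β : Type} [Fintype β] [DecidableEq β]

/-- The tensor product `v 0 ⊗ v 1 ⊗ ⋯ ⊗ v (d-1)` of vectors written in coordinates. -/
def tensorOf {d : ℕ} (v : Fin d → (β →₀ K)) : TPow K β d :=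
  ∑ k ∈ Fintype.piFinset (fun i => (v i).support),
    (∏ i, (v i) (k i)) • Finsupp.single k (1 : K)

/-- parity of a `Fin 3`-valued part marker: `0 = 𝔞`, `1 = 𝔠` (both even), `2 = odd`. -/
def par2 (x : Fin 3) : ZMod 2 := if x = 2 then 1 else 0

/-- total parity of a basis tuple -/
def tupleParity (p : β → Fin 3) {d : ℕ} (k : Fin d → β) : ZMod 2 := ∑ i, par2 (p (k i))

/-- the even part of the tensor power (span of basis tuples of even total parity) -/
def evenPart (p : β → Fin 3) (d : ℕ) : Submodule K (TPow K β d) :=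
  Finsupp.supported K K {k | tupleParity p k = 0}

/-- the odd part of the tensor power -/
def oddPart (p : β → Fin 3) (d : ℕ) : Submodule K (TPow K β d) :=
  Finsupp.supported K K {k | tupleParity p k = 1}

/-- the sign count `⟨σ; v⟩` for the signed place-permutation action -/
def permSign (p : β → Fin 3) {d : ℕ} (σ : Equiv.Perm (Fin d)) (k : Fin d → β) : ℕ :=
  (Finset.univ.filter fun q : Fin d × Fin d =>
     q.1 < q.2 ∧ σ⁻¹ q.2 < σ⁻¹ q.1 ∧ p (k q.1) = 2 ∧ p (k q.2) = 2).card

/-- the signed place-permutation action of `σ ∈ S_d` on `V^{⊗ d}` -/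
def permAct (p : β → Fin 3) {d : ℕ} (σ : Equiv.Perm (Fin d)) :
    TPow K β d →ₗ[K] TPow K β d :=
  Finsupp.lsum K fun k => LinearMap.toSpanSingleton K _
    (((-1 : K) ^ permSign p σ k) • Finsupp.single (k ∘ σ) (1 : K))

/-- the divided power `Γ^d V`: invariants of the signed place-permutation action -/
def Gamma (p : β → Fin 3) (d : ℕ) : Submodule K (TPow K β d) :=
  ⨅ σ : Equiv.Perm (Fin d), LinearMap.eqLocus (permAct K p σ) LinearMap.id

/-- A calibrated family of vectors of the "supermodule" `β →₀ K`: an index set `ι`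
with a partition into `𝔞`- (`part = 0`), `𝔠`- (`part = 1`) and odd (`part = 2`) parts,
a total order (realized through an `ℕ`-encoding `ord`) and the actual vectors `vec`. -/
structure CalFamily (β : Type) : Type 1 where
  ι : Type
  fin : Fintype ι
  deq : DecidableEq ι
  part : ι → Fin 3
  ord : ι → ℕ
  vec : ι → (β →₀ K)

attribute [instance] CalFamily.fin CalFamily.deq

namespace CalFamily

variable {K}
variable (F : CalFamily K β)

/-- `Seq(B,d)`: tuples in which an entry may repeat only if it is even -/
def IsSeq {d : ℕ} (b : Fin d → F.ι) : Prop :=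
  ∀ i j : Fin d, i ≠ j → b i = b j → F.part (b i) ≠ 2

/-- the inversion count `⟨b⟩` among odd entries -/
def inversions {d : ℕ} (b : Fin d → F.ι) : ℕ :=
  (Finset.univ.filter fun q : Fin d × Fin d =>
    q.1 < q.2 ∧ F.part (b q.1) = 2 ∧ F.part (b q.2) = 2 ∧ F.ord (b q.2) < F.ord (b q.1)).card

/-- the `S_d`-orbit of a tuple -/
def orbit {d : ℕ} (b : Fin d → F.ι) : Finset (Fin d → F.ι) :=
  Finset.univ.filter fun b' => ∃ σ : Equiv.Perm (Fin d), b' = b ∘ σ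

/-- the element `x_b ∈ Γ^d V` -/
def x {d : ℕ} (b : Fin d → F.ι) : TPow K β d :=
  ∑ b' ∈ F.orbit b,
    ((-1 : K) ^ (F.inversions b + F.inversions b')) • tensorOf K (fun i => F.vec (b' i))

/-- the factorial `[b]^!_𝔠` -/
def mfac {d : ℕ} (b : Fin d → F.ι) : ℕ :=
  ∏ c ∈ Finset.univ.filter (fun c : F.ι => F.part c = 1),
    (Finset.univ.filter fun i : Fin d => b i = c).card.factorial

/-- the element `y_b = [b]^!_𝔠 • x_b` -/
def y {d : ℕ} (b : Fin d → F.ι) : TPow K β d := F.mfac b • F.x b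

end CalFamily

/-- the modified divided power `Γ̃^d V`, as a submodule of the coordinate tensor power -/
def gammaTilde (F : CalFamily K β) (d : ℕ) : Submodule K (TPow K β d) :=
  Submodule.span K {w | ∃ b : Fin d → F.ι, F.IsSeq b ∧ w = F.y b}

/-- the standard calibrated family: the basis of `β →₀ K` given by `β` itself -/
def stdFam (p : β → Fin 3) (ord : β → ℕ) : CalFamily K β :=
  ⟨β, inferInstance, inferInstance, p, ord, fun b => Finsupp.single b 1⟩

/-- the Koszul sign `⟨a, v⟩ = #{(k,l) | k > l, a_k odd, v_l odd}` -/
def koszul {α : Type} (pA : α → Fin 3) (pV : β → Fin 3) {d : ℕ}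
    (a : Fin d → α) (k : Fin d → β) : ℕ :=
  (Finset.univ.filter fun q : Fin d × Fin d =>
    q.2 < q.1 ∧ pA (a q.1) = 2 ∧ pV (k q.2) = 2).card

/-- the (left) action of an element `x` of the `d`-th tensor power of a superalgebra `A`
(with basis `α` and structure constants `act`) on the `d`-th tensor power of a
supermodule with basis `β`, including Koszul signs. -/
def kact {α : Type} [Fintype α] [DecidableEq α]
    (pA : α → Fin 3) (pV : β → Fin 3) (act : α → β → (β →₀ K)) {d : ℕ}
    (x : TPow K α d) : TPow K β d →ₗ[K] TPow K β d :=
  Finsupp.lsum K fun k => LinearMap.toSpanSingleton K _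
    (x.sum fun a r => (r * (-1 : K) ^ koszul pA pV a k) • tensorOf K (fun i => act (a i) (k i)))

/-- the right action analogue of `kact` (for right supermodules), `v ↦ v · x` -/
def rkact {α : Type} [Fintype α] [DecidableEq α]
    (pA : α → Fin 3) (pV : β → Fin 3) (ract : β → α → (β →₀ K)) {d : ℕ}
    (x : TPow K α d) : TPow K β d →ₗ[K] TPow K β d :=
  Finsupp.lsum K fun k => LinearMap.toSpanSingleton K _
    (x.sum fun a r => (r * (-1 : K) ^ koszul pV pA k a) • tensorOf K (fun i => ract (k i) (a i)))

/-- shortest coset representatives for `(S_c × S_e) \ S_{c+e}` -/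
def shuffles (c e : ℕ) : Finset (Equiv.Perm (Fin (c + e))) :=
  Finset.univ.filter fun σ =>
    (∀ i j : Fin (c + e), (i : ℕ) < c → (j : ℕ) < c → i < j → σ⁻¹ i < σ⁻¹ j) ∧
    (∀ i j : Fin (c + e), c ≤ (i : ℕ) → c ≤ (j : ℕ) → i < j → σ⁻¹ i < σ⁻¹ j)

/-- the outer (concatenation) product `V^{⊗c} ⊗ V^{⊗e} → V^{⊗(c+e)}`, as a bilinear map -/
def outerL (c e : ℕ) : TPow K β c →ₗ[K] TPow K β e →ₗ[K] TPow K β (c + e) :=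
  Finsupp.lsum K fun k1 => LinearMap.toSpanSingleton K _
    (Finsupp.lsum K fun k2 => LinearMap.toSpanSingleton K _
      (Finsupp.single (Fin.append k1 k2) (1 : K)))

/-- the star product `w1 * w2 = Σ_σ (w1 ⊗ w2)^σ` over shortest coset representatives -/
def starL (p : β → Fin 3) (c e : ℕ) : TPow K β c →ₗ[K] TPow K β e →ₗ[K] TPow K β (c + e) :=
  ∑ σ ∈ shuffles c e, (outerL K c e).compr₂ (permAct K p σ)

/-- cast of a coordinate tensor power along an equality of tensor degrees -/
def castTPow {c d : ℕ} (h : c = d) : TPow K β c →ₗ[K] TPow K β d :=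
  Finsupp.lmapDomain K K (fun k => k ∘ (Fin.cast h.symm))

/-- embedding of coordinates along a map of basis index sets -/
def embTPow {γ : Type} (f : β → γ) (d : ℕ) : TPow K β d →ₗ[K] TPow K γ d :=
  Finsupp.lmapDomain K K (fun k => f ∘ k)

end

end Paper
namespace Paper

noncomputable section

variable (K : Type) [CommRing K]

/-- the index of the `q`-th position of the `p`-th block (blocks ordered via `ow`,
with sizes `c`) inside `Fin d`, `d = Σ c` -/
def blockIdx {ι : Type} [Fintype ι] [DecidableEq ι] (ow : ι → ℕ) (c : ι → ℕ) {d : ℕ}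
    (hd : ∑ p, c p = d) (p : ι) (q : Fin (c p)) : Fin d :=
  ⟨(∑ p' ∈ Finset.univ.filter (fun p' => ow p' < ow p), c p') + (q : ℕ), by
    have hq := q.2
    have hsub : (Finset.univ.filter (fun p' => ow p' < ow p)) ⊆ Finset.univ.erase p := by
      intro x hx
      rcases Finset.mem_filter.mp hx with ⟨_, hlt⟩
      exact Finset.mem_erase.mpr ⟨by intro hxp; rw [hxp] at hlt; exact lt_irrefl _ hlt, Finset.mem_univ x⟩
    have h1 : (∑ p' ∈ Finset.univ.filter (fun p' => ow p' < ow p), c p')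
        ≤ ∑ p' ∈ Finset.univ.erase p, c p' :=
      Finset.sum_le_sum_of_subset hsub
    have h2 := Finset.sum_erase_add Finset.univ c (Finset.mem_univ p)
    omega⟩

/-- iterated outer (concatenation) product of a finite family of tensors,
concatenated in the order given by `ow` -/
def bigOuter {β : Type} [Fintype β] [DecidableEq β] {ι : Type} [Fintype ι] [DecidableEq ι]
    (ow : ι → ℕ) (c : ι → ℕ) {d : ℕ}
    (hd : ∑ p, c p = d) (v : ∀ p : ι, TPow K β (c p)) : TPow K β d :=
  ∑ k : Fin d → β, (∏ p, (v p) (fun q => k (blockIdx ow c hd p q))) • Finsupp.single k (1 : K)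

end

end Paper
namespace Paper

noncomputable section

variable (K : Type) [CommRing K]

/-- bilinear extension of structure constants `f` to the spanned free modules -/
def pairExt {α β γ : Type} (f : α → β → (γ →₀ K)) (x : α →₀ K) (y : β →₀ K) : γ →₀ K :=
  x.sum fun a r => y.sum fun b s => (r * s) • f a b

/-- linear extension of a basis-valued map -/
def oneExt {α γ : Type} (f : α → (γ →₀ K)) (x : α →₀ K) : γ →₀ K :=
  x.sum fun a r => r • f a

variable {β : Type} [Fintype β] [DecidableEq β]

/-- the bilinear form on `β →₀ K` with Gram matrix `G` -/
def formV (G : β → β → K) : (β →₀ K) →ₗ[K] (β →₀ K) →ₗ[K] K :=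
  Finsupp.lsum K fun b => LinearMap.toSpanSingleton K _
    (Finsupp.lsum K fun b' => LinearMap.toSpanSingleton K K (G b b'))

/-- the induced (signed) bilinear form `(·,·)_d` on the `d`-th tensor power -/
def formD (p : β → Fin 3) (G : β → β → K) (d : ℕ) :
    TPow K β d →ₗ[K] TPow K β d →ₗ[K] K :=
  Finsupp.lsum K fun k => LinearMap.toSpanSingleton K _
    (Finsupp.lsum K fun k' => LinearMap.toSpanSingleton K K
      (((-1 : K) ^ koszul p p k k') * ∏ i, G (k i) (k' i)))

end

end Paper
open Classical

namespace Paper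

noncomputable section

/-! ## Combinatorics of multipartitions -/

section Comb

variable (ℓ n : ℕ)

/-- `I`-multicompositions with at most `n` parts, `I = {0,…,ℓ}` -/
abbrev MultiComp := Fin (ℓ+1) → Fin n → ℕ

variable {ℓ n}

def mcSize (μ : MultiComp ℓ n) : ℕ := ∑ i, ∑ r, μ i r

def IsMultiPartition (μ : MultiComp ℓ n) : Prop := ∀ i, Antitone (μ i)

def norms (μ : MultiComp ℓ n) : Fin (ℓ+1) → ℕ := fun i => ∑ r, μ i r

/-- dominance order on compositions -/
def Dominates (lam mu : Fin n → ℕ) : Prop :=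
  ∀ s : Fin n, ∑ r ∈ Finset.univ.filter (· ≤ s), lam r ≤ ∑ r ∈ Finset.univ.filter (· ≤ s), mu r

/-- the order `⊴_I` on `ℤ_{≥0}^I` determined by a partial order `po` on `I` -/
def domI (po : Fin (ℓ+1) → Fin (ℓ+1) → Prop) (a b : Fin (ℓ+1) → ℕ) : Prop :=
  ∀ i, ∑ j ∈ Finset.univ.filter (fun j => po i j), a j ≤
       ∑ j ∈ Finset.univ.filter (fun j => po i j), b j

/-- the order `≤_I` on multicompositions -/
def leI (po : Fin (ℓ+1) → Fin (ℓ+1) → Prop) (lam mu : MultiComp ℓ n) : Prop :=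
  (domI po (norms lam) (norms mu) ∧ norms lam ≠ norms mu) ∨
  (norms lam = norms mu ∧ ∀ i, Dominates (lam i) (mu i))

/-- `ι_i(λ)`: the multicomposition concentrated in component `i` -/
def iotaP (i : Fin (ℓ+1)) (lam : Fin n → ℕ) : MultiComp ℓ n :=
  fun i' => if i' = i then lam else 0

/-- the one-row partition `(m)` -/
def rowP (n m : ℕ) : Fin n → ℕ := fun r => if (r : ℕ) = 0 then m else 0

/-- the one-column partition `(1^m)` -/
def colP (n m : ℕ) : Fin n → ℕ := fun r => if (r : ℕ) < m then 1 else 0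

/-- the conjugate partition -/
def conjP (lam : Fin n → ℕ) : Fin n → ℕ :=
  fun c => (Finset.univ.filter fun r => (c : ℕ) < lam r).card

/-- reversal of the components of a multicomposition -/
def revM (μ : MultiComp ℓ n) : MultiComp ℓ n := fun i => μ i.rev

/-- componentwise conjugate of a multipartition -/
def conjM (μ : MultiComp ℓ n) : MultiComp ℓ n := fun i => conjP (μ i)

/-- componentwise sum of multicompositions -/
def addM (lam mu : MultiComp ℓ n) : MultiComp ℓ n := fun i r => lam i r + mu i r

end Comb

/-! ## Filling tuples (used to construct the idempotents `η_μ`) -/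

def cumSum (c : ℕ → ℕ) (m : ℕ) : ℕ := ∑ m' ∈ Finset.range (m+1), c m'

def fillIdx (c : ℕ → ℕ) (k : ℕ) : ℕ :=
  if h : ∃ m, k < cumSum c m then Nat.find h else 0

def mcFun {ℓ n : ℕ} (μ : MultiComp ℓ n) : ℕ → ℕ := fun m =>
  if h : m < (ℓ+1) * n then
    μ (finProdFinEquiv.symm (⟨m, h⟩ : Fin ((ℓ+1) * n))).1
      (finProdFinEquiv.symm (⟨m, h⟩ : Fin ((ℓ+1) * n))).2
  else 0

def decodeIdx {ℓ n : ℕ} [NeZero n] (m : ℕ) : Fin (ℓ+1) × Fin n :=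
  if h : m < (ℓ+1) * n then finProdFinEquiv.symm ⟨m, h⟩ else ((0 : Fin (ℓ+1)), ⟨0, Nat.pos_of_ne_zero (NeZero.ne n)⟩)

/-- a tuple realizing the multicomposition `μ`, listing the pairs `(i,r)` with
multiplicities `μ i r` in the lexicographic order -/
def etaTuple {ℓ n : ℕ} [NeZero n] (μ : MultiComp ℓ n) (d : ℕ) :
    Fin d → Fin (ℓ+1) × Fin n :=
  fun k => decodeIdx (fillIdx (mcFun μ) k)

/-! ## Generalized Schur algebras presented by a calibrated basis with idempotents -/

/-- The data of a superalgebra `A` over `F` presented by a finite calibrated basis `βA`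
(with `part = 0/1/2` for `𝔞/𝔠/odd`), structure constants `mulA`, distinguished
standard idempotent basis elements `eA i` for `i ∈ I = {0,…,ℓ}`, and a partial
order `po` on `I` (refining nothing in particular here). -/
structure SchurAlgData (F : Type) [CommRing F] (ℓ : ℕ) : Type 1 where
  βA : Type
  finA : Fintype βA
  deqA : DecidableEq βA
  pA : βA → Fin 3
  ordA : βA → ℕ
  mulA : βA → βA → (βA →₀ F)
  eA : Fin (ℓ+1) → βA
  po : Fin (ℓ+1) → Fin (ℓ+1) → Prop

attribute [instance] SchurAlgData.finA SchurAlgData.deqA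

namespace SchurAlgData

variable {F : Type} [CommRing F] {ℓ : ℕ} (S : SchurAlgData F ℓ) (n d : ℕ)

/-- the basis of the matrix superalgebra `M_n(A)` -/
abbrev MBt := S.βA × Fin n × Fin n

def pM : S.MBt n → Fin 3 := fun m => S.pA m.1

def ordM : S.MBt n → ℕ := fun m => (S.ordA m.1 * n + (m.2.1 : ℕ)) * n + (m.2.2 : ℕ)

/-- structure constants of `M_n(A)`: `ξ^b_{rs} ξ^{b'}_{r's'} = δ_{s,r'} (b b')_{r,s'}` -/
def mulM : S.MBt n → S.MBt n → (S.MBt n →₀ F) := fun x y =>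
  if x.2.2 = y.2.1 then Finsupp.mapDomain (fun c => (c, x.2.1, y.2.2)) (S.mulA x.1 y.1)
  else 0

/-- the generalized Schur algebra `T^A(n,d) = Γ̃^d M_n(A)`, in coordinates -/
def alg : Submodule F (TPow F (S.MBt n) d) :=
  gammaTilde F (stdFam F (S.pM n) (S.ordM n)) d

/-- left multiplication by `x` in (the ambient space of) `T^A(n,d)` -/
def amul (x : TPow F (S.MBt n) d) : TPow F (S.MBt n) d →ₗ[F] TPow F (S.MBt n) d :=
  kact F (S.pM n) (S.pM n) (fun a b => S.mulM n a b) x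

/-- right multiplication by `x` (with the appropriate Koszul signs) -/
def ramul (x : TPow F (S.MBt n) d) : TPow F (S.MBt n) d →ₗ[F] TPow F (S.MBt n) d :=
  rkact F (S.pM n) (S.pM n) (fun b a => S.mulM n b a) x

/-- the set of even elements of the ambient space of `T^A(n,d)` -/
def evA : Set (TPow F (S.MBt n) d) := (evenPart F (S.pM n) d : Set _)

/-- the set of odd elements -/
def odA : Set (TPow F (S.MBt n) d) := (oddPart F (S.pM n) d : Set _)

/-- the idempotent `η_μ = η^{e_0}_{μ^{(0)}} * ⋯ * η^{e_ℓ}_{μ^{(ℓ)}} ∈ T^A(n,d)` -/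
def eta [NeZero n] (μ : MultiComp ℓ n) : TPow F (S.MBt n) d :=
  (stdFam F (S.pM n) (S.ordM n)).y
    (fun k => (S.eA (etaTuple μ d k).1, (etaTuple μ d k).2, (etaTuple μ d k).2))

def lStable (N : Submodule F (TPow F (S.MBt n) d)) : Prop :=
  ∀ x ∈ S.alg n d, ∀ v ∈ N, S.amul n d x v ∈ N

def rStable (N : Submodule F (TPow F (S.MBt n) d)) : Prop :=
  ∀ x ∈ S.alg n d, ∀ v ∈ N, S.ramul n d x v ∈ N

/-- the left ideal of `T^A(n,d)` generated by a set -/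
def lIdeal (T : Set (TPow F (S.MBt n) d)) : Submodule F (TPow F (S.MBt n) d) :=
  sInf {N | T ⊆ N ∧ S.lStable n d N}

/-- the right ideal generated by a set -/
def rIdeal (T : Set (TPow F (S.MBt n) d)) : Submodule F (TPow F (S.MBt n) d) :=
  sInf {N | T ⊆ N ∧ S.rStable n d N}

/-- the two-sided ideal generated by a set -/
def tIdeal (T : Set (TPow F (S.MBt n) d)) : Submodule F (TPow F (S.MBt n) d) :=
  sInf {N | T ⊆ N ∧ S.lStable n d N ∧ S.rStable n d N}

/-- the idempotents `η_μ` for multipartitions `μ >_I λ` -/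
def hiSet [NeZero n] (lam : MultiComp ℓ n) : Set (TPow F (S.MBt n) d) :=
  {w | ∃ μ : MultiComp ℓ n, mcSize μ = d ∧ IsMultiPartition μ ∧
        leI S.po lam μ ∧ μ ≠ lam ∧ w = S.eta n d μ}

/-- the two-sided ideal `T^A(n,d)^{> λ}` -/
def idealHi [NeZero n] (lam : MultiComp ℓ n) : Submodule F (TPow F (S.MBt n) d) :=
  S.tIdeal n d (S.hiSet n d lam)

/-- the standard module `Δ(λ)` is the subquotient `D1 λ / D2 λ` of the regular module -/
def D1 [NeZero n] (lam : MultiComp ℓ n) : Submodule F (TPow F (S.MBt n) d) :=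
  S.lIdeal n d {S.eta n d lam}

def D2 [NeZero n] (lam : MultiComp ℓ n) : Submodule F (TPow F (S.MBt n) d) :=
  S.D1 n d lam ⊓ S.idealHi n d lam

/-- the right standard module `Δ^op(λ)` is the subquotient `R1 λ / R2 λ` -/
def R1 [NeZero n] (lam : MultiComp ℓ n) : Submodule F (TPow F (S.MBt n) d) :=
  S.rIdeal n d {S.eta n d lam}

def R2 [NeZero n] (lam : MultiComp ℓ n) : Submodule F (TPow F (S.MBt n) d) :=
  S.R1 n d lam ⊓ S.idealHi n d lam

end SchurAlgData

/-! ## Relational isomorphisms of subquotient supermodules -/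

/-- `SubQuotIso Ta evA odA aM aN evM odM evN odN Phi Plo Qhi Qlo ε` says that the
subquotient `Phi/Plo` (of an ambient module `M` on which the algebra elements act via
`aM`) is isomorphic, via a supermodule isomorphism of parity `ε`, to the subquotient
`Qhi/Qlo` (with action `aN`). Over a field, an isomorphism of subquotients is always
induced by an ambient linear map, which is how it is encoded here. -/
def SubQuotIso {F : Type} [CommRing F] {A M N : Type}
    [AddCommGroup M] [Module F M] [AddCommGroup N] [Module F N]
    (Ta evA odA : Set A) (aM : A → M →ₗ[F] M) (aN : A → N →ₗ[F] N)
    (evM odM : Set M) (evN odN : Set N)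
    (Phi Plo : Submodule F M) (Qhi Qlo : Submodule F N) (ε : Bool) : Prop :=
  Plo ≤ Phi ∧ Qlo ≤ Qhi ∧
  ∃ f : M →ₗ[F] N,
    (∀ v ∈ Phi, f v ∈ Qhi) ∧ (∀ v ∈ Plo, f v ∈ Qlo) ∧
    (∀ w ∈ Qhi, ∃ v ∈ Phi, f v - w ∈ Qlo) ∧
    (∀ v ∈ Phi, f v ∈ Qlo → v ∈ Plo) ∧
    (∀ x ∈ Ta ∩ evA, ∀ v ∈ Phi, f (aM x v) - aN x (f v) ∈ Qlo) ∧
    (∀ x ∈ Ta ∩ odA, ∀ v ∈ Phi,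
       f (aM x v) - (if ε then (-1 : F) else 1) • aN x (f v) ∈ Qlo) ∧
    (∀ v ∈ Phi, v ∈ evM → ∃ w ∈ (if ε then odN else evN), f v - w ∈ Qlo) ∧
    (∀ v ∈ Phi, v ∈ odM → ∃ w ∈ (if ε then evN else odN), f v - w ∈ Qlo)

/-! ## Supermodules over `T^A(n,d)`, filtrations and tilting modules -/

/-- a supermodule over `T^A(n,d)` presented in coordinates: a basis `βV` with
parities `pV` and the structure constants `actV` of the action of `M_n(A)` -/
structure ModSetting {F : Type} [CommRing F] {ℓ : ℕ} (S : SchurAlgData F ℓ) (n : ℕ) :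
    Type 1 where
  βV : Type
  finV : Fintype βV
  deqV : DecidableEq βV
  pV : βV → Fin 3
  actV : S.MBt n → βV → (βV →₀ F)

attribute [instance] ModSetting.finV ModSetting.deqV

namespace ModSetting

variable {F : Type} [CommRing F] {ℓ : ℕ} {S : SchurAlgData F ℓ} {n : ℕ}
variable (MS : ModSetting S n) (d : ℕ)

/-- the action of elements of (the ambient space of) `T^A(n,d)` -/
def act (x : TPow F (S.MBt n) d) : TPow F MS.βV d →ₗ[F] TPow F MS.βV d :=
  kact F (S.pM n) MS.pV MS.actV x

def evM : Set (TPow F MS.βV d) := (evenPart F MS.pV d : Set _)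

def odM : Set (TPow F MS.βV d) := (oddPart F MS.pV d : Set _)

def stable (N : Submodule F (TPow F MS.βV d)) : Prop :=
  ∀ x ∈ S.alg n d, ∀ v ∈ N, MS.act d x v ∈ N

/-- the factor `Whi/Wlo` is isomorphic (as a supermodule, up to parity shift)
to the standard module `Δ(λ)` -/
def stdFactorAt [NeZero n] (Whi Wlo : Submodule F (TPow F MS.βV d))
    (lam : MultiComp ℓ n) : Prop :=
  ∃ ε : Bool,
    SubQuotIso (S.alg n d : Set _) (S.evA n d) (S.odA n d)
      (MS.act d) (fun x => S.amul n d x)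
      (MS.evM d) (MS.odM d) (S.evA n d) (S.odA n d)
      Whi Wlo (S.D1 n d lam) (S.D2 n d lam) ε

/-- the factor `Whi/Wlo` is isomorphic (as a supermodule, up to parity shift) to the
costandard module `∇(λ) = (Δ^op(λ))^*`; this is encoded by a perfect contravariant
pairing with the right standard module `Δ^op(λ) = R1 λ / R2 λ`. -/
def nablaFactorAt [NeZero n] (Whi Wlo : Submodule F (TPow F MS.βV d))
    (lam : MultiComp ℓ n) : Prop :=
  ∃ ε : Bool, ∃ B : TPow F MS.βV d →ₗ[F] TPow F (S.MBt n) d →ₗ[F] F,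
    (∀ v ∈ Wlo, ∀ w ∈ S.R1 n d lam, B v w = 0) ∧
    (∀ v ∈ Whi, ∀ w ∈ S.R2 n d lam, B v w = 0) ∧
    (∀ v ∈ Whi, (∀ w ∈ S.R1 n d lam, B v w = 0) → v ∈ Wlo) ∧
    (∀ w ∈ S.R1 n d lam, (∀ v ∈ Whi, B v w = 0) → w ∈ S.R2 n d lam) ∧
    (∀ v ∈ Whi, ∀ pv : Bool, v ∈ (if pv then MS.odM d else MS.evM d) →
      ∀ w ∈ S.R1 n d lam, ∀ pw : Bool, w ∈ (if pw then S.odA n d else S.evA n d) →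
        ((pv != pw) ≠ ε → B v w = 0)) ∧
    (∀ x ∈ (S.alg n d : Set _), ∀ px : Bool, x ∈ (if px then S.odA n d else S.evA n d) →
      ∀ v ∈ Whi, ∀ pv : Bool, v ∈ (if pv then MS.odM d else MS.evM d) →
      ∀ w ∈ S.R1 n d lam, ∀ pw : Bool, w ∈ (if pw then S.odA n d else S.evA n d) →
        B (MS.act d x v) w =
          (if px && (pv != pw) then (-1 : F) else 1) * B v (S.ramul n d x w))

/-- a standard filtration of `hi/lo` with all factors of the form `Δ(λ)`, `λ ∈ allowed` -/
def IsStdFiltBy [NeZero n] (lo hi : Submodule F (TPow F MS.βV d))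
    (allowed : Set (MultiComp ℓ n)) : Prop :=
  ∃ L : ℕ, ∃ W : Fin (L+1) → Submodule F (TPow F MS.βV d),
    Monotone W ∧ W 0 = lo ∧ W (Fin.last L) = hi ∧
    (∀ r, MS.stable d (W r)) ∧
    ∀ r : Fin L, ∃ lam, lam ∈ allowed ∧ mcSize lam = d ∧ IsMultiPartition lam ∧
      MS.stdFactorAt d (W r.succ) (W r.castSucc) lam

/-- a costandard filtration of `hi/lo` -/
def IsCoStdFilt [NeZero n] (lo hi : Submodule F (TPow F MS.βV d)) : Prop :=
  ∃ L : ℕ, ∃ W : Fin (L+1) → Submodule F (TPow F MS.βV d),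
    Monotone W ∧ W 0 = lo ∧ W (Fin.last L) = hi ∧
    (∀ r, MS.stable d (W r)) ∧
    ∀ r : Fin L, ∃ lam : MultiComp ℓ n, mcSize lam = d ∧ IsMultiPartition lam ∧
      MS.nablaFactorAt d (W r.succ) (W r.castSucc) lam

/-- tilting supermodule: admits both a standard and a costandard filtration -/
def IsTilting [NeZero n] (V : Submodule F (TPow F MS.βV d)) : Prop :=
  MS.IsStdFiltBy d ⊥ V Set.univ ∧ MS.IsCoStdFilt d ⊥ V

/-- indecomposability (as a supermodule) -/
def Indec (V : Submodule F (TPow F MS.βV d)) : Prop :=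
  ¬ ∃ U U' : Submodule F (TPow F MS.βV d),
      MS.stable d U ∧ MS.stable d U' ∧ U ⊓ U' = ⊥ ∧ U ⊔ U' = V ∧ U ≠ ⊥ ∧ U' ≠ ⊥

/-- `V` is (a copy of) the indecomposable tilting supermodule `T(λ)`:
it is tilting, indecomposable, contains a copy of `Δ(λ)` such that the quotient has
a standard filtration with factors `Δ(μ)`, `μ < λ`. -/
def IsIndecTilting [NeZero n] (lam : MultiComp ℓ n)
    (V : Submodule F (TPow F MS.βV d)) : Prop :=
  MS.IsTilting d V ∧ MS.Indec d V ∧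
  ∃ U : Submodule F (TPow F MS.βV d), U ≤ V ∧ MS.stable d U ∧
    MS.stdFactorAt d U ⊥ lam ∧
    MS.IsStdFiltBy d U V {μ | leI S.po μ lam ∧ μ ≠ lam}

/-- full tilting supermodule: tilting, and every indecomposable tilting supermodule
`T(λ)` occurs as a direct summand -/
def IsFullTilting [NeZero n] (V : Submodule F (TPow F MS.βV d)) : Prop :=
  MS.IsTilting d V ∧
  ∀ lam : MultiComp ℓ n, mcSize lam = d → IsMultiPartition lam →
    ∃ U U' : Submodule F (TPow F MS.βV d),
      MS.stable d U ∧ MS.stable d U' ∧ U ⊓ U' = ⊥ ∧ U ⊔ U' = V ∧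
      MS.IsIndecTilting d lam U

end ModSetting

end

end Paper
namespace Paper

noncomputable section

open Classical

variable (R : Type) [CommRing R]
variable {βA : Type} [Fintype βA] [DecidableEq βA]
variable (n : ℕ)

/-- the calibration of the matrix superalgebra `M_n(A)` -/
def pMn (pA : βA → Fin 3) : βA × Fin n × Fin n → Fin 3 := fun m => pA m.1

def ordMn (ordA : βA → ℕ) : βA × Fin n × Fin n → ℕ :=
  fun m => (ordA m.1 * n + (m.2.1 : ℕ)) * n + (m.2.2 : ℕ)

/-- structure constants of `M_n(A)` -/
def mulMn (mulA : βA → βA → (βA →₀ R)) :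
    βA × Fin n × Fin n → βA × Fin n × Fin n → ((βA × Fin n × Fin n) →₀ R) := fun x y =>
  if x.2.2 = y.2.1 then Finsupp.mapDomain (fun c => (c, x.2.1, y.2.2)) (mulA x.1 y.1)
  else 0

/-- structure constants of the column module `Col_n(A)` over `M_n(A)` -/
def colAct (mulA : βA → βA → (βA →₀ R)) :
    βA × Fin n × Fin n → βA × Fin n → ((βA × Fin n) →₀ R) := fun x c =>
  if x.2.2 = c.2 then Finsupp.mapDomain (fun b => (b, x.2.1)) (mulA x.1 c.1) else 0

/-- the calibrated family presenting `Col_n(Ae)` inside `Col_n(A)` -/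
def colFamE (pA : βA → Fin 3) (ordA : βA → ℕ) (mulA : βA → βA → (βA →₀ R)) (e : βA →₀ R) :
    CalFamily R (βA × Fin n) :=
  ⟨{b : βA // pairExt R mulA (Finsupp.single b 1) e = Finsupp.single b 1} × Fin n,
   inferInstance, inferInstance,
   fun q => pA q.1.1, fun q => ordA q.1.1 * n + (q.2 : ℕ),
   fun q => Finsupp.single (q.1.1, q.2) 1⟩

/-- the idempotent `η^{e^d}_{1^d,1^d} = (ξ^e_{1,1})^{⊗ d}` -/
def etaE [NeZero n] (e : βA →₀ R) (d : ℕ) : TPow R (βA × Fin n × Fin n) d :=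
  tensorOf R (fun _ : Fin d =>
    Finsupp.mapDomain (fun b => (b, (0 : Fin n), (0 : Fin n))) e)

section S19aux

variable {K : Type} [CommRing K] {β : Type} [Fintype β] [DecidableEq β]

lemma tensorOf_eq_sum_univ {d : ℕ} (v : Fin d → (β →₀ K)) :
    tensorOf K v = ∑ k : Fin d → β, (∏ i, (v i) (k i)) • Finsupp.single k (1 : K) := by
  rw [tensorOf]
  refine Finset.sum_subset (Finset.subset_univ _) ?_
  intro k _ hk
  rw [Fintype.mem_piFinset] at hk
  push_neg at hk
  obtain ⟨i, hi⟩ := hk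
  rw [Finsupp.notMem_support_iff] at hi
  rw [Finset.prod_eq_zero (Finset.mem_univ i) hi, zero_smul]

/-- `tensorOf` as a multilinear map -/
noncomputable def tensorOfM (d : ℕ) :
    MultilinearMap K (fun _ : Fin d => (β →₀ K)) (TPow K β d) :=
  ∑ k : Fin d → β,
    (LinearMap.toSpanSingleton K _ (Finsupp.single k (1:K))).compMultilinearMap
      ((MultilinearMap.mkPiAlgebra K (Fin d) K).compLinearMap
        (fun i => Finsupp.lapply (k i)))

lemma tensorOfM_apply {d : ℕ} (v : Fin d → (β →₀ K)) :
    tensorOfM d v = tensorOf K v := by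
  rw [tensorOf_eq_sum_univ, tensorOfM, MultilinearMap.sum_apply]
  simp [LinearMap.toSpanSingleton_apply, smul_eq_mul, mul_comm]

lemma tensorOf_single {d : ℕ} (h : Fin d → β) :
    tensorOf K (fun i => Finsupp.single (h i) (1:K)) = Finsupp.single h 1 := by
  rw [tensorOf_eq_sum_univ, Finset.sum_eq_single h]
  · simp
  · intro k _ hk
    have : ∃ i, h i ≠ k i := by
      by_contra hb; push_neg at hb; exact hk (funext fun i => (hb i).symm)
    obtain ⟨i, hi⟩ := this
    rw [Finset.prod_eq_zero (Finset.mem_univ i), zero_smul]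
    rw [Finsupp.single_apply, if_neg hi]
  · intro h'; exact absurd (Finset.mem_univ _) h'

lemma tensorOf_zero_coord {d : ℕ} (v : Fin d → (β →₀ K)) (i : Fin d) (hi : v i = 0) :
    tensorOf K v = 0 := by
  rw [← tensorOfM_apply]; exact (tensorOfM d).map_coord_zero i hi

lemma kact_apply_single {α : Type} [Fintype α] [DecidableEq α]
    (pA : α → Fin 3) (pV : β → Fin 3) (act : α → β → (β →₀ K)) {d : ℕ}
    (x : TPow K α d) (k : Fin d → β) :
    kact K pA pV act x (Finsupp.single k 1) =
      x.sum fun a r => (r * (-1 : K) ^ koszul pA pV a k) •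
        tensorOf K (fun i => act (a i) (k i)) := by
  rw [kact]
  simp [Finsupp.lsum_single, LinearMap.toSpanSingleton_apply]

lemma rkact_apply_single {α : Type} [Fintype α] [DecidableEq α]
    (pA : α → Fin 3) (pV : β → Fin 3) (ract : β → α → (β →₀ K)) {d : ℕ}
    (x : TPow K α d) (k : Fin d → β) :
    rkact K pA pV ract x (Finsupp.single k 1) =
      x.sum fun a r => (r * (-1 : K) ^ koszul pV pA k a) •
        tensorOf K (fun i => ract (k i) (a i)) := by
  rw [rkact]
  simp [Finsupp.lsum_single, LinearMap.toSpanSingleton_apply]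

end S19aux

section S19emb

set_option linter.unusedSectionVars false

variable {K : Type} [CommRing K] {β γ : Type} [Fintype β] [DecidableEq β]
  [Fintype γ] [DecidableEq γ]

lemma embTPow_single {d : ℕ} (f : β → γ) (k : Fin d → β) (c : K) :
    embTPow K f d (Finsupp.single k c) = Finsupp.single (f ∘ k) c := by
  rw [embTPow, Finsupp.lmapDomain_apply, Finsupp.mapDomain_single]

lemma embTPow_tensorOf {d : ℕ} (f : β → γ) (hf : Function.Injective f)
    (v : Fin d → (β →₀ K)) :
    embTPow K f d (tensorOf K v) = tensorOf K (fun i => Finsupp.mapDomain f (v i)) := by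
  have hcomp : Function.Injective (fun k : Fin d → β => f ∘ k) := by
    intro a b h
    funext i
    exact hf (congrFun h i)
  calc embTPow K f d (tensorOf K v)
      = ∑ k : Fin d → β, (∏ i, (v i) (k i)) • Finsupp.single (f ∘ k) (1:K) := by
        rw [tensorOf_eq_sum_univ, map_sum]
        exact Finset.sum_congr rfl fun k _ => by rw [map_smul, embTPow_single]
    _ = ∑ m ∈ (Finset.univ.image fun k : Fin d → β => f ∘ k),
          (∏ i, (Finsupp.mapDomain f (v i)) (m i)) • Finsupp.single m (1:K) := by
        rw [Finset.sum_image (fun x _ y _ h => hcomp h)]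
        refine Finset.sum_congr rfl fun k _ => ?_
        congr 1
        exact Finset.prod_congr rfl fun i _ => by
          rw [Function.comp_apply, Finsupp.mapDomain_apply hf]
    _ = tensorOf K (fun i => Finsupp.mapDomain f (v i)) := by
        rw [tensorOf_eq_sum_univ (fun i => Finsupp.mapDomain f (v i))]
        refine Finset.sum_subset (Finset.subset_univ _) ?_
        intro m _ hm
        have : ∃ i, ∀ x, f x ≠ m i := by
          by_contra hc
          push_neg at hc
          choose kk hkk using hc
          exact hm (Finset.mem_image.mpr ⟨kk, Finset.mem_univ _, funext hkk⟩)
        obtain ⟨i, hi⟩ := this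
        have hz : Finsupp.mapDomain f (v i) (m i) = 0 := by
          rw [← Finsupp.notMem_support_iff]
          intro hmem
          have := Finsupp.mapDomain_support (f := f) (s := v i) hmem
          rw [Finset.mem_image] at this
          obtain ⟨x, _, hx⟩ := this
          exact hi x hx
        rw [Finset.prod_eq_zero (Finset.mem_univ i) hz, zero_smul]

lemma embTPow_supported {d : ℕ} (f : β → γ) (p : β → Fin 3) (p' : γ → Fin 3)
    (hp : ∀ x, p' (f x) = p x) (c : ZMod 2) (v : TPow K β d)
    (hv : v ∈ Finsupp.supported K K {k | tupleParity p k = c}) :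
    embTPow K f d v ∈ Finsupp.supported K K {m | tupleParity p' m = c} := by
  rw [Finsupp.mem_supported] at hv ⊢
  intro m hm
  rw [embTPow, Finsupp.lmapDomain_apply] at hm
  have := Finsupp.mapDomain_support (f := fun k : Fin d → β => f ∘ k)
    (Finset.mem_coe.mp hm)
  rw [Finset.mem_image] at this
  obtain ⟨k, hk, rfl⟩ := this
  have hkp : tupleParity p k = c := hv hk
  show tupleParity p' (f ∘ k) = c
  rw [← hkp]
  unfold tupleParity
  exact Finset.sum_congr rfl fun i _ => by rw [Function.comp_apply, hp]

end S19emb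

section S19transfer

set_option linter.unusedSectionVars false

variable [NeZero n] (pA : βA → Fin 3) (ordA : βA → ℕ) (mulA : βA → βA → (βA →₀ R))
  (e : βA →₀ R)

/-- the entrywise embedding `Col_n(A) → M_n(A)` on basis labels -/
def gm : βA × Fin n → βA × Fin n × Fin n := fun c => (c.1, c.2, 0)

lemma gm_inj : Function.Injective (gm (βA := βA) n) := by
  intro a b h
  simp only [gm, Prod.mk.injEq] at h
  exact Prod.ext h.1 h.2.1

/-- the embedding on the index set of the calibrated family of `Col_n(Ae)` -/
def Gm : (colFamE R n pA ordA mulA e).ι → βA × Fin n × Fin n :=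
  fun q => (q.1.1, q.2, 0)

lemma Gm_inj : Function.Injective (Gm R n pA ordA mulA e) := by
  intro a b h
  simp only [Gm, Prod.mk.injEq] at h
  exact Prod.ext (Subtype.ext h.1) h.2.1

lemma ord_transfer (x : (colFamE R n pA ordA mulA e).ι) :
    (stdFam R (pMn n pA) (ordMn n ordA)).ord (Gm R n pA ordA mulA e x) =
      ((colFamE R n pA ordA mulA e).ord x) * n := by
  show (ordA x.1.1 * n + (x.2 : ℕ)) * n + ((0 : Fin n) : ℕ)
      = (ordA x.1.1 * n + (x.2 : ℕ)) * n
  simp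

lemma part_transfer (x : (colFamE R n pA ordA mulA e).ι) :
    (stdFam R (pMn n pA) (ordMn n ordA)).part (Gm R n pA ordA mulA e x) =
      (colFamE R n pA ordA mulA e).part x := rfl

lemma inv_transfer {d : ℕ} (b : Fin d → (colFamE R n pA ordA mulA e).ι) :
    (stdFam R (pMn n pA) (ordMn n ordA)).inversions
        (fun i => Gm R n pA ordA mulA e (b i)) =
      (colFamE R n pA ordA mulA e).inversions b := by
  unfold CalFamily.inversions
  congr 1
  apply Finset.filter_congr
  intro q _
  rw [part_transfer, part_transfer, ord_transfer, ord_transfer]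
  have hn : 0 < n := Nat.pos_of_ne_zero (NeZero.ne n)
  constructor
  · rintro ⟨h1, h2, h3, h4⟩
    exact ⟨h1, h2, h3, by exact (Nat.mul_lt_mul_right hn).mp h4⟩
  · rintro ⟨h1, h2, h3, h4⟩
    exact ⟨h1, h2, h3, by exact (Nat.mul_lt_mul_right hn).mpr h4⟩

lemma isSeq_transfer {d : ℕ} (b : Fin d → (colFamE R n pA ordA mulA e).ι) :
    (stdFam R (pMn n pA) (ordMn n ordA)).IsSeq (fun i => Gm R n pA ordA mulA e (b i)) ↔
      (colFamE R n pA ordA mulA e).IsSeq b := by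
  unfold CalFamily.IsSeq
  constructor
  · intro h i j hij hbij
    exact h i j hij (congrArg _ hbij)
  · intro h i j hij hGij
    exact h i j hij (Gm_inj R n pA ordA mulA e hGij)

lemma orbit_transfer {d : ℕ} (b : Fin d → (colFamE R n pA ordA mulA e).ι) :
    (stdFam R (pMn n pA) (ordMn n ordA)).orbit (fun i => Gm R n pA ordA mulA e (b i)) =
      ((colFamE R n pA ordA mulA e).orbit b).image
        (fun b' i => Gm R n pA ordA mulA e (b' i)) := by
  ext c
  refine Iff.trans ?_ (Finset.mem_image (f := fun (b' : Fin d → (colFamE R n pA ordA mulA e).ι) i => Gm R n pA ordA mulA e (b' i))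
    (b := (c : Fin d → βA × Fin n × Fin n))).symm
  simp only [CalFamily.orbit, Finset.mem_filter, Finset.mem_univ, true_and]
  constructor
  · rintro ⟨σ, rfl⟩
    exact ⟨b ∘ σ, ⟨σ, rfl⟩, rfl⟩
  · rintro ⟨b', ⟨σ, rfl⟩, rfl⟩
    exact ⟨σ, rfl⟩

lemma mfac_transfer {d : ℕ} (b : Fin d → (colFamE R n pA ordA mulA e).ι) :
    (stdFam R (pMn n pA) (ordMn n ordA)).mfac (fun i => Gm R n pA ordA mulA e (b i)) =
      (colFamE R n pA ordA mulA e).mfac b := by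
  show (∏ c ∈ Finset.univ.filter (fun c : βA × Fin n × Fin n => pA c.1 = 1),
      (Finset.univ.filter
        (fun i : Fin d => Gm R n pA ordA mulA e (b i) = c)).card.factorial)
    = ∏ c ∈ Finset.univ.filter
        (fun c : (colFamE R n pA ordA mulA e).ι => pA c.1.1 = 1),
      (Finset.univ.filter (fun i : Fin d => b i = c)).card.factorial
  have hsub1 : (Finset.univ.filter
        (fun c : (colFamE R n pA ordA mulA e).ι => pA c.1.1 = 1)).image
          (Gm R n pA ordA mulA e) ⊆
      Finset.univ.filter (fun c : βA × Fin n × Fin n => pA c.1 = 1) := by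
    intro c hc
    rw [Finset.mem_image] at hc
    obtain ⟨x, hx, rfl⟩ := hc
    rw [Finset.mem_filter] at hx ⊢
    exact ⟨Finset.mem_univ _, hx.2⟩
  have hz : ∀ c ∈ Finset.univ.filter (fun c : βA × Fin n × Fin n => pA c.1 = 1),
      c ∉ (Finset.univ.filter
        (fun c : (colFamE R n pA ordA mulA e).ι => pA c.1.1 = 1)).image
          (Gm R n pA ordA mulA e) →
      (Finset.univ.filter
        (fun i : Fin d => Gm R n pA ordA mulA e (b i) = c)).card.factorial = 1 := by
    intro c hc hcn
    have hcnt : (Finset.univ.filter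
        (fun i : Fin d => Gm R n pA ordA mulA e (b i) = c)) = ∅ := by
      rw [Finset.filter_eq_empty_iff]
      intro i _ hGc
      apply hcn
      rw [Finset.mem_image]
      refine ⟨b i, ?_, hGc⟩
      rw [Finset.mem_filter]
      refine ⟨Finset.mem_univ _, ?_⟩
      have h1 : pA c.1 = 1 := (Finset.mem_filter.mp hc).2
      rw [← hGc] at h1
      exact h1
    rw [hcnt]
    simp
  rw [← Finset.prod_subset hsub1 hz]
  rw [Finset.prod_image (fun x _ y _ h => Gm_inj R n pA ordA mulA e h)]
  refine Finset.prod_congr rfl ?_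
  intro x _
  congr 1
  refine congrArg Finset.card ?_
  apply Finset.filter_congr
  intro i _
  constructor
  · exact fun h => Gm_inj R n pA ordA mulA e h
  · exact fun h => congrArg _ h

lemma y_transfer {d : ℕ} (b : Fin d → (colFamE R n pA ordA mulA e).ι) :
    embTPow R (gm n) d ((colFamE R n pA ordA mulA e).y b) =
      (stdFam R (pMn n pA) (ordMn n ordA)).y (fun i => Gm R n pA ordA mulA e (b i)) := by
  unfold CalFamily.y
  rw [map_nsmul, mfac_transfer]
  congr 1
  unfold CalFamily.x
  rw [map_sum, orbit_transfer]
  refine Eq.trans ?_ (Finset.sum_image (f := fun b' : Fin d → βA × Fin n × Fin n => (-1 : R) ^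
          (((stdFam R (pMn n pA) (ordMn n ordA)).inversions fun i => Gm R n pA ordA mulA e (b i)) +
            (stdFam R (pMn n pA) (ordMn n ordA)).inversions b') •
          tensorOf R (fun i => (stdFam R (pMn n pA) (ordMn n ordA)).vec (b' i)))
      (s := (colFamE R n pA ordA mulA e).orbit b)
      (g := fun (b' : Fin d → (colFamE R n pA ordA mulA e).ι) i => Gm R n pA ordA mulA e (b' i))
      (fun x hx y hy h => by
      funext i
      exact Gm_inj R n pA ordA mulA e (congrFun h i))).symm
  refine Finset.sum_congr rfl ?_
  intro b' _
  rw [LinearMap.map_smul, inv_transfer, inv_transfer]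
  congr 1
  have h1 : (fun i => (colFamE R n pA ordA mulA e).vec (b' i)) =
      fun i => Finsupp.single (((b' i).1.1, (b' i).2) : βA × Fin n) (1 : R) := rfl
  have h2 : (fun i => (stdFam R (pMn n pA) (ordMn n ordA)).vec
        ((fun b'' i => Gm R n pA ordA mulA e (b'' i)) b' i)) =
      fun i => Finsupp.single (Gm R n pA ordA mulA e (b' i)) (1 : R) := rfl
  rw [h1, h2, tensorOf_single, tensorOf_single, embTPow_single]
  rfl

end S19transfer

section S19proj

set_option linter.unusedSectionVars false

variable [NeZero n] (pA : βA → Fin 3) (mulA : βA → βA → (βA →₀ R)) (e : βA →₀ R)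

/-- inclusion of `βA` as `(1,1)` matrix-unit labels -/
def h0 : βA → βA × Fin n × Fin n := fun b => (b, 0, 0)

lemma h0_inj : Function.Injective (h0 (βA := βA) n) := by
  intro a b h
  exact congrArg Prod.fst h

lemma pairExt_single_left (b : βA) :
    pairExt R mulA (Finsupp.single b (1 : R)) e = e.sum fun a s => s • mulA b a := by
  rw [pairExt, Finsupp.sum_single_index]
  · refine Finsupp.sum_congr fun a _ => ?_
    rw [one_mul]
  · simp

lemma mulMn_h0 (x : βA × Fin n × Fin n) (a : βA) (hx : x.2.2 = 0) :
    mulMn R n mulA x (h0 n a) =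
      Finsupp.mapDomain (fun c => (c, x.2.1, (0 : Fin n))) (mulA x.1 a) := by
  rw [mulMn, if_pos (show x.2.2 = (h0 n a).2.1 from hx)]
  rfl

lemma mulMn_h0_ne (x : βA × Fin n × Fin n) (a : βA) (hx : x.2.2 ≠ 0) :
    mulMn R n mulA x (h0 n a) = 0 := by
  rw [mulMn, if_neg (show ¬ x.2.2 = (h0 n a).2.1 from hx)]

/-- the key computation: right multiplication by `η^{e^d}` acts on a basis tensor as
multiplying each factor on the right by `ξ^e_{1,1}` -/
lemma rkact_etaE_single (hea : e ∈ Finsupp.supported R R {b | pA b = 0})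
    {d : ℕ} (k : Fin d → βA × Fin n × Fin n) :
    rkact R (pMn n pA) (pMn n pA) (fun v a => mulMn R n mulA v a) (etaE R n e d)
        (Finsupp.single k 1) =
      tensorOfM d (fun i =>
        if (k i).2.2 = 0
        then Finsupp.mapDomain (fun c => (c, (k i).2.1, (0 : Fin n)))
               (pairExt R mulA (Finsupp.single (k i).1 1) e)
        else 0) := by
  rw [rkact_apply_single]
  -- rewrite the `Finsupp.sum` as a linear map applied to `etaE`
  set L : TPow R (βA × Fin n × Fin n) d →ₗ[R] TPow R (βA × Fin n × Fin n) d :=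
    Finsupp.lsum R fun a => LinearMap.toSpanSingleton R _
      (((-1 : R) ^ koszul (pMn n pA) (pMn n pA) k a) •
        tensorOf R (fun i => mulMn R n mulA (k i) (a i))) with hLdef
  have hL : ((etaE R n e d).sum fun a r =>
      (r * (-1 : R) ^ koszul (pMn n pA) (pMn n pA) k a) •
        tensorOf R (fun i => mulMn R n mulA (k i) (a i))) = L (etaE R n e d) := by
    rw [hLdef, Finsupp.lsum_apply]
    refine Finsupp.sum_congr fun a _ => ?_
    rw [LinearMap.toSpanSingleton_apply, smul_smul]
  rw [hL]
  -- expand `etaE` and push `L` through the sum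
  have hmd : (Finsupp.mapDomain (fun b : βA => (b, (0:Fin n), (0:Fin n))) e).support
      = e.support.image (h0 n) :=
    Finsupp.mapDomain_support_of_injective (h0_inj n) e
  rw [etaE, tensorOf, map_sum]
  have hterm : ∀ t ∈ Fintype.piFinset (fun _ : Fin d =>
      (Finsupp.mapDomain (fun b : βA => (b, (0:Fin n), (0:Fin n))) e).support),
      L ((∏ i, (Finsupp.mapDomain (fun b : βA => (b, (0:Fin n), (0:Fin n))) e) (t i)) •
          Finsupp.single t (1:R)) =
        (∏ i, (Finsupp.mapDomain (fun b : βA => (b, (0:Fin n), (0:Fin n))) e) (t i)) •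
          (((-1 : R) ^ koszul (pMn n pA) (pMn n pA) k t) •
            tensorOf R (fun i => mulMn R n mulA (k i) (t i))) := by
    intro t _
    rw [map_smul, hLdef, Finsupp.lsum_single, LinearMap.toSpanSingleton_apply, one_smul]
  rw [Finset.sum_congr rfl hterm]
  -- reindex the sum over tuples in the image of `h0`
  have hre : ∑ t ∈ Fintype.piFinset (fun _ : Fin d =>
      (Finsupp.mapDomain (fun b : βA => (b, (0:Fin n), (0:Fin n))) e).support),
      (∏ i, (Finsupp.mapDomain (fun b : βA => (b, (0:Fin n), (0:Fin n))) e) (t i)) •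
        (((-1 : R) ^ koszul (pMn n pA) (pMn n pA) k t) •
          tensorOf R (fun i => mulMn R n mulA (k i) (t i))) =
    ∑ a ∈ Fintype.piFinset (fun _ : Fin d => e.support),
      (∏ i, e (a i)) • tensorOf R (fun i => mulMn R n mulA (k i) (h0 n (a i))) := by
    refine Finset.sum_nbij' (i := fun t => fun i => (t i).1) (j := fun a => fun i => h0 n (a i))
      ?_ ?_ ?_ ?_ ?_
    · intro t ht
      rw [Fintype.mem_piFinset] at ht ⊢
      intro i
      have := ht i
      rw [hmd, Finset.mem_image] at this
      obtain ⟨x, hx, hxe⟩ := this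
      show (t i).1 ∈ e.support
      rw [← hxe]
      exact hx
    · intro a ha
      rw [Fintype.mem_piFinset] at ha ⊢
      intro i
      rw [hmd, Finset.mem_image]
      exact ⟨a i, ha i, rfl⟩
    · intro t ht
      rw [Fintype.mem_piFinset] at ht
      funext i
      have := ht i
      rw [hmd, Finset.mem_image] at this
      obtain ⟨x, _, hxe⟩ := this
      show h0 n ((t i).1) = t i
      rw [← hxe]
      rfl
    · intro a _
      rfl
    · intro t ht
      rw [Fintype.mem_piFinset] at ht
      have htk : t = fun i => h0 n ((t i).1) := by
        funext i
        have := ht i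
        rw [hmd, Finset.mem_image] at this
        obtain ⟨x, _, hxe⟩ := this
        rw [← hxe]
        rfl
      have hsign : koszul (pMn n pA) (pMn n pA) k t = 0 := by
        rw [koszul, Finset.card_eq_zero, Finset.filter_eq_empty_iff]
        intro q _
        rintro ⟨-, -, h2⟩
        have hq := ht q.2
        rw [hmd, Finset.mem_image] at hq
        obtain ⟨x, hx, hxe⟩ := hq
        have hx0 : pA x = 0 := hea hx
        rw [← hxe] at h2
        have : pA x = 2 := h2
        rw [hx0] at this
        exact absurd this (by decide)
      have hcoef : ∀ i, (Finsupp.mapDomain (fun b : βA => (b, (0:Fin n), (0:Fin n))) e) (t i)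
          = e ((t i).1) := by
        intro i
        conv_lhs => rw [htk]
        exact Finsupp.mapDomain_apply (h0_inj n) e _
      rw [hsign, pow_zero, one_smul]
      rw [Finset.prod_congr rfl fun i _ => hcoef i]
      congr 1
      conv_lhs => rw [htk]
  rw [hre]
  -- now use multilinearity of `tensorOf`
  have hWi : ∀ i, (if (k i).2.2 = 0
      then Finsupp.mapDomain (fun c => (c, (k i).2.1, (0 : Fin n)))
             (pairExt R mulA (Finsupp.single (k i).1 1) e)
      else 0) = ∑ a ∈ e.support, e a • mulMn R n mulA (k i) (h0 n a) := by
    intro i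
    by_cases hs : (k i).2.2 = 0
    · rw [if_pos hs, pairExt_single_left, Finsupp.mapDomain_sum, Finsupp.sum]
      refine Finset.sum_congr rfl fun a _ => ?_
      rw [Finsupp.mapDomain_smul, mulMn_h0 R n mulA _ _ hs]
    · rw [if_neg hs]
      symm
      refine Finset.sum_eq_zero fun a _ => ?_
      rw [mulMn_h0_ne R n mulA _ _ hs, smul_zero]
  rw [show (fun i => if (k i).2.2 = 0
      then Finsupp.mapDomain (fun c => (c, (k i).2.1, (0 : Fin n)))
             (pairExt R mulA (Finsupp.single (k i).1 1) e)
      else 0) = fun i => ∑ a ∈ e.support, e a • mulMn R n mulA (k i) (h0 n a)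
    from funext hWi]
  rw [MultilinearMap.map_sum_finset (tensorOfM d)
    (fun (i : Fin d) (a : βA) => e a • mulMn R n mulA (k i) (h0 n a))
    (fun _ => e.support)]
  refine Finset.sum_congr rfl fun a _ => ?_
  rw [MultilinearMap.map_smul_univ, tensorOfM_apply]

end S19proj

section S19proj2

set_option linter.unusedSectionVars false

variable [NeZero n] (pA : βA → Fin 3) (ordA : βA → ℕ) (mulA : βA → βA → (βA →₀ R))
  (e : βA →₀ R)

lemma rkact_etaE_single_good (hea : e ∈ Finsupp.supported R R {b | pA b = 0})
    {d : ℕ} (k : Fin d → βA × Fin n × Fin n)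
    (hall : ∀ i, (k i).2.2 = 0 ∧
      pairExt R mulA (Finsupp.single (k i).1 1) e = Finsupp.single (k i).1 1) :
    rkact R (pMn n pA) (pMn n pA) (fun v a => mulMn R n mulA v a) (etaE R n e d)
        (Finsupp.single k 1) = Finsupp.single k 1 := by
  rw [rkact_etaE_single R n pA mulA e hea k]
  have hfun : (fun i => if (k i).2.2 = 0
      then Finsupp.mapDomain (fun c => (c, (k i).2.1, (0 : Fin n)))
             (pairExt R mulA (Finsupp.single (k i).1 1) e)
      else 0) = fun i => Finsupp.single (k i) (1:R) := by
    funext i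
    rw [if_pos (hall i).1, (hall i).2, Finsupp.mapDomain_single]
    congr 1
    rw [← (hall i).1]
  rw [hfun, tensorOfM_apply, tensorOf_single]

lemma rkact_etaE_single_bad (hea : e ∈ Finsupp.supported R R {b | pA b = 0})
    (hbe : ∀ b : βA, pairExt R mulA (Finsupp.single b 1) e = Finsupp.single b 1 ∨
                     pairExt R mulA (Finsupp.single b 1) e = 0)
    {d : ℕ} (k : Fin d → βA × Fin n × Fin n)
    (hbad : ¬ ∀ i, (k i).2.2 = 0 ∧
      pairExt R mulA (Finsupp.single (k i).1 1) e = Finsupp.single (k i).1 1) :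
    rkact R (pMn n pA) (pMn n pA) (fun v a => mulMn R n mulA v a) (etaE R n e d)
        (Finsupp.single k 1) = 0 := by
  rw [rkact_etaE_single R n pA mulA e hea k]
  push_neg at hbad
  obtain ⟨i, hi⟩ := hbad
  refine (tensorOfM d).map_coord_zero i ?_
  by_cases hs : (k i).2.2 = 0
  · rw [if_pos hs]
    rcases hbe (k i).1 with h | h
    · exact absurd h (hi hs)
    · rw [h, Finsupp.mapDomain_zero]
  · rw [if_neg hs]

lemma koszul_gm {d : ℕ} (a : Fin d → βA × Fin n × Fin n) (k : Fin d → βA × Fin n) :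
    koszul (pMn n pA) (pMn n pA) a (gm n ∘ k) =
      koszul (pMn n pA) (fun c : βA × Fin n => pA c.1) a k := rfl

lemma mapDomain_colAct (x : βA × Fin n × Fin n) (c : βA × Fin n) :
    Finsupp.mapDomain (gm n) (colAct R n mulA x c) = mulMn R n mulA x (gm n c) := by
  rw [colAct, mulMn]
  by_cases h : x.2.2 = c.2
  · rw [if_pos h, if_pos (show x.2.2 = (gm n c).2.1 from h), ← Finsupp.mapDomain_comp]
    rfl
  · rw [if_neg h, if_neg (show ¬ x.2.2 = (gm n c).2.1 from h), Finsupp.mapDomain_zero]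

lemma emb_kact {d : ℕ} (x : TPow R (βA × Fin n × Fin n) d) (u : TPow R (βA × Fin n) d) :
    embTPow R (gm n) d
      (kact R (pMn n pA) (fun c : βA × Fin n => pA c.1) (colAct R n mulA) x u) =
    kact R (pMn n pA) (pMn n pA) (mulMn R n mulA) x (embTPow R (gm n) d u) := by
  induction u using Finsupp.induction_linear with
  | zero => simp only [map_zero]
  | add f g hf hg => rw [map_add, map_add, map_add, map_add, hf, hg]
  | single k r =>
    have hsmul : (Finsupp.single k r : TPow R (βA × Fin n) d) = r • Finsupp.single k 1 := by
      rw [Finsupp.smul_single, smul_eq_mul, mul_one]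
    rw [hsmul, map_smul, map_smul, map_smul, map_smul]
    congr 1
    rw [embTPow_single]
    rw [kact_apply_single, kact_apply_single]
    rw [map_finsuppSum]
    refine Finsupp.sum_congr fun a _ => ?_
    rw [map_smul, embTPow_tensorOf _ (gm_inj n), koszul_gm]
    congr 1
    exact congrArg (tensorOf R) (funext fun i => mapDomain_colAct R n mulA (a i) (k i))

lemma pi_y_good (hea : e ∈ Finsupp.supported R R {b | pA b = 0})
    {d : ℕ} (b : Fin d → βA × Fin n × Fin n)
    (hall : ∀ i, (b i).2.2 = 0 ∧
      pairExt R mulA (Finsupp.single (b i).1 1) e = Finsupp.single (b i).1 1) :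
    rkact R (pMn n pA) (pMn n pA) (fun v a => mulMn R n mulA v a) (etaE R n e d)
        ((stdFam R (pMn n pA) (ordMn n ordA)).y b) =
      (stdFam R (pMn n pA) (ordMn n ordA)).y b := by
  unfold CalFamily.y CalFamily.x
  rw [map_nsmul]
  congr 1
  rw [map_sum]
  refine Finset.sum_congr rfl fun b' hb' => ?_
  rw [map_smul]
  congr 1
  obtain ⟨σ, rfl⟩ : ∃ σ : Equiv.Perm (Fin d), b' = b ∘ σ := (Finset.mem_filter.mp hb').2
  have hvec : (fun i => (stdFam R (pMn n pA) (ordMn n ordA)).vec ((b ∘ σ) i)) =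
      fun i => Finsupp.single ((b ∘ σ) i) (1:R) := rfl
  rw [hvec, tensorOf_single]
  exact rkact_etaE_single_good R n pA mulA e hea (b ∘ σ) (fun i => hall (σ i))

lemma pi_y_bad (hea : e ∈ Finsupp.supported R R {b | pA b = 0})
    (hbe : ∀ b : βA, pairExt R mulA (Finsupp.single b 1) e = Finsupp.single b 1 ∨
                     pairExt R mulA (Finsupp.single b 1) e = 0)
    {d : ℕ} (b : Fin d → βA × Fin n × Fin n)
    (hbad : ¬ ∀ i, (b i).2.2 = 0 ∧
      pairExt R mulA (Finsupp.single (b i).1 1) e = Finsupp.single (b i).1 1) :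
    rkact R (pMn n pA) (pMn n pA) (fun v a => mulMn R n mulA v a) (etaE R n e d)
        ((stdFam R (pMn n pA) (ordMn n ordA)).y b) = 0 := by
  unfold CalFamily.y CalFamily.x
  rw [map_nsmul, map_sum]
  have hz : ∀ b' ∈ (stdFam R (pMn n pA) (ordMn n ordA)).orbit b,
      rkact R (pMn n pA) (pMn n pA) (fun v a => mulMn R n mulA v a) (etaE R n e d)
        (((-1:R) ^ ((stdFam R (pMn n pA) (ordMn n ordA)).inversions b +
            (stdFam R (pMn n pA) (ordMn n ordA)).inversions b')) •
          tensorOf R (fun i => (stdFam R (pMn n pA) (ordMn n ordA)).vec (b' i))) = 0 := by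
    intro b' hb'
    rw [map_smul]
    obtain ⟨σ, rfl⟩ : ∃ σ : Equiv.Perm (Fin d), b' = b ∘ σ := (Finset.mem_filter.mp hb').2
    have hvec : (fun i => (stdFam R (pMn n pA) (ordMn n ordA)).vec ((b ∘ σ) i)) =
        fun i => Finsupp.single ((b ∘ σ) i) (1:R) := rfl
    rw [hvec, tensorOf_single]
    rw [rkact_etaE_single_bad R n pA mulA e hea hbe (b ∘ σ) ?_, smul_zero]
    intro hc
    apply hbad
    intro j
    have := hc (σ.symm j)
    rw [Function.comp_apply, Equiv.apply_symm_apply] at this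
    exact this
  rw [Finset.sum_congr rfl hz, Finset.sum_const_zero, smul_zero]

end S19proj2

/-!
STATEMENT 19: Let `A` be a calibrated `R`-superalgebra, `n ≥ 1`, and `e ∈ 𝔞` an
idempotent with `be ∈ {b,0}` for all `b ∈ B^A`. Calibrating `Col_n(Ae)` entrywise,
there is an isomorphism of left `T^A(n,d)_R`-supermodules
`Γ̃^d(Col_n(Ae)) ≅ T^A(n,d)_R · η^{e^d}_{1^d,1^d}`.
-/
theorem statement19
    [IsDomain R] [IsPrincipalIdealRing R] [CharZero R]
    [NeZero n] (d : ℕ)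
    (pA : βA → Fin 3) (ordA : βA → ℕ) (mulA : βA → βA → (βA →₀ R)) (one : βA →₀ R)
    (hassoc : ∀ a b c : βA,
      pairExt R mulA (mulA a b) (Finsupp.single c 1) =
      pairExt R mulA (Finsupp.single a 1) (mulA b c))
    (honel : ∀ a : βA, pairExt R mulA one (Finsupp.single a 1) = Finsupp.single a 1)
    (honer : ∀ a : βA, pairExt R mulA (Finsupp.single a 1) one = Finsupp.single a 1)
    (hmulpar : ∀ a a', ∀ b ∈ (mulA a a').support,
      par2 (pA b) = par2 (pA a) + par2 (pA a'))
    (hsub : ∀ a a', pA a = 0 → pA a' = 0 → ∀ b ∈ (mulA a a').support, pA b = 0)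
    (honea : one ∈ Finsupp.supported R R {b | pA b = 0})
    (e : βA →₀ R)
    (hea : e ∈ Finsupp.supported R R {b | pA b = 0})
    (hidem : pairExt R mulA e e = e)
    (hbe : ∀ b : βA, pairExt R mulA (Finsupp.single b 1) e = Finsupp.single b 1 ∨
                     pairExt R mulA (Finsupp.single b 1) e = 0) :
    ∃ φ : ↥(gammaTilde R (colFamE R n pA ordA mulA e) d) ≃ₗ[R]
          ↥(Submodule.map
              (rkact R (pMn n pA) (pMn n pA) (fun v a => mulMn R n mulA v a) (etaE R n e d))
              (gammaTilde R (stdFam R (pMn n pA) (ordMn n ordA)) d)),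
      (∀ x ∈ gammaTilde R (stdFam R (pMn n pA) (ordMn n ordA)) d,
        ∀ v w : ↥(gammaTilde R (colFamE R n pA ordA mulA e) d),
          (w : TPow R (βA × Fin n) d) =
              kact R (pMn n pA) (fun c => pA c.1) (colAct R n mulA) x
                (v : TPow R (βA × Fin n) d) →
          ∀ v' w' : ↥(Submodule.map
              (rkact R (pMn n pA) (pMn n pA) (fun v a => mulMn R n mulA v a) (etaE R n e d))
              (gammaTilde R (stdFam R (pMn n pA) (ordMn n ordA)) d)),
            v' = φ v → w' = φ w →
            (w' : TPow R (βA × Fin n × Fin n) d) =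
              kact R (pMn n pA) (pMn n pA) (mulMn R n mulA) x
                (v' : TPow R (βA × Fin n × Fin n) d)) ∧
      (∀ v : ↥(gammaTilde R (colFamE R n pA ordA mulA e) d),
        ((v : TPow R (βA × Fin n) d) ∈ evenPart R (fun c => pA c.1) d →
          (φ v : TPow R (βA × Fin n × Fin n) d) ∈ evenPart R (pMn n pA) d) ∧
        ((v : TPow R (βA × Fin n) d) ∈ oddPart R (fun c => pA c.1) d →
          (φ v : TPow R (βA × Fin n × Fin n) d) ∈ oddPart R (pMn n pA) d)) := by
  classical
  have hGm_good : ∀ (b : Fin d → (colFamE R n pA ordA mulA e).ι) (i : Fin d),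
      ((fun i => Gm R n pA ordA mulA e (b i)) i).2.2 = 0 ∧
      pairExt R mulA (Finsupp.single ((fun i => Gm R n pA ordA mulA e (b i)) i).1 1) e =
        Finsupp.single ((fun i => Gm R n pA ordA mulA e (b i)) i).1 1 :=
    fun b i => ⟨rfl, (b i).1.2⟩
  have hmapspan :
      Submodule.map (embTPow R (gm n) d) (gammaTilde R (colFamE R n pA ordA mulA e) d) =
      Submodule.map (rkact R (pMn n pA) (pMn n pA) (fun v a => mulMn R n mulA v a)
          (etaE R n e d))
        (gammaTilde R (stdFam R (pMn n pA) (ordMn n ordA)) d) := by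
    rw [gammaTilde, gammaTilde, Submodule.map_span, Submodule.map_span]
    apply le_antisymm
    · rw [Submodule.span_le]
      rintro w ⟨w', ⟨b, hb, rfl⟩, rfl⟩
      apply Submodule.subset_span
      refine ⟨(stdFam R (pMn n pA) (ordMn n ordA)).y (fun i => Gm R n pA ordA mulA e (b i)),
        ⟨fun i => Gm R n pA ordA mulA e (b i),
          (isSeq_transfer R n pA ordA mulA e b).mpr hb, rfl⟩, ?_⟩
      rw [pi_y_good R n pA ordA mulA e hea _ (hGm_good b)]
      exact (y_transfer R n pA ordA mulA e b).symm
    · rw [Submodule.span_le]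
      rintro w ⟨w', ⟨b, hb, rfl⟩, rfl⟩
      by_cases hall : ∀ i, (b i).2.2 = 0 ∧
          pairExt R mulA (Finsupp.single (b i).1 1) e = Finsupp.single (b i).1 1
      · apply Submodule.subset_span
        set b'' : Fin d → (colFamE R n pA ordA mulA e).ι :=
          fun i => (⟨(b i).1, (hall i).2⟩, (b i).2.1) with hb''
        have hGb : (fun i => Gm R n pA ordA mulA e (b'' i)) = b := by
          funext i
          show ((b i).1, (b i).2.1, (0 : Fin n)) = b i
          rw [← (hall i).1]
          rfl
        refine ⟨(colFamE R n pA ordA mulA e).y b'', ⟨b'', ?_, rfl⟩, ?_⟩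
        · apply (isSeq_transfer R n pA ordA mulA e b'').mp
          rw [hGb]
          exact hb
        · rw [pi_y_good R n pA ordA mulA e hea b hall, ← hGb,
            ← y_transfer R n pA ordA mulA e b'']
      · rw [pi_y_bad R n pA ordA mulA e hea hbe b hall]
        exact Submodule.zero_mem _
  have hsub : ∀ v ∈ gammaTilde R (colFamE R n pA ordA mulA e) d,
      embTPow R (gm n) d v ∈ Submodule.map (rkact R (pMn n pA) (pMn n pA)
          (fun v a => mulMn R n mulA v a) (etaE R n e d))
        (gammaTilde R (stdFam R (pMn n pA) (ordMn n ordA)) d) := by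
    intro v hv
    rw [← hmapspan]
    exact Submodule.mem_map_of_mem hv
  have hinj0 : Function.Injective (embTPow R (gm (βA := βA) n) d) := by
    have hgk : Function.Injective (fun k : Fin d → βA × Fin n => gm n ∘ k) := by
      intro u v h
      funext i
      exact gm_inj n (congrFun h i)
    intro u v h
    rw [embTPow, Finsupp.lmapDomain_apply, Finsupp.lmapDomain_apply] at h
    exact Finsupp.mapDomain_injective hgk h
  let f0 := (embTPow R (gm n) d).restrict hsub
  have hfc : ∀ u : ↥(gammaTilde R (colFamE R n pA ordA mulA e) d),
      (f0 u : TPow R (βA × Fin n × Fin n) d) = embTPow R (gm n) d (u : TPow R (βA × Fin n) d) :=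
    fun u => rfl
  have hbij : Function.Bijective f0 := by
    constructor
    · intro u v h
      apply Subtype.ext
      apply hinj0
      rw [← hfc u, ← hfc v, h]
    · rintro ⟨w, hw⟩
      rw [← hmapspan] at hw
      obtain ⟨v, hv, hvw⟩ := hw
      exact ⟨⟨v, hv⟩, Subtype.ext (by rw [hfc]; exact hvw)⟩
  refine ⟨LinearEquiv.ofBijective f0 hbij, ?_, ?_⟩
  · intro x hx v w hw v' w' hv' hw'
    have hv'c : (v' : TPow R (βA × Fin n × Fin n) d)
        = embTPow R (gm n) d (v : TPow R (βA × Fin n) d) := by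
      rw [hv', LinearEquiv.ofBijective_apply, hfc]
    have hw'c : (w' : TPow R (βA × Fin n × Fin n) d)
        = embTPow R (gm n) d (w : TPow R (βA × Fin n) d) := by
      rw [hw', LinearEquiv.ofBijective_apply, hfc]
    rw [hw'c, hw, hv'c]
    exact emb_kact R n pA mulA x (v : TPow R (βA × Fin n) d)
  · intro v
    have hc : ((LinearEquiv.ofBijective f0 hbij) v : TPow R (βA × Fin n × Fin n) d)
        = embTPow R (gm n) d (v : TPow R (βA × Fin n) d) := by
      rw [LinearEquiv.ofBijective_apply, hfc]
    constructor
    · intro hv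
      rw [hc]
      exact embTPow_supported (gm n) (fun c : βA × Fin n => pA c.1) (pMn n pA)
        (fun x => rfl) 0 (v : TPow R (βA × Fin n) d) hv
    · intro hv
      rw [hc]
      exact embTPow_supported (gm n) (fun c : βA × Fin n => pA c.1) (pMn n pA)
        (fun x => rfl) 1 (v : TPow R (βA × Fin n) d) hv

end

end Paper
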